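/- The number of n₁×n₂ lonesum matrices equals ∑_{j=0}^{min(n₁,n₂)} (j!)² · S(n₁+1,j+1) · S(n₂+1,j+1), where S denotes the Stirling numbers of the second kind. -/

import Mathlib

/-- An orientation of a simple graph `G`, encoded as a function `f` where `f u v = true`
means the edge `{u,v}` is directed from `u` to `v`. Every edge gets exactly one direction,
and non-edges carry no direction. -/
def IsOrientation {V : Type*} (G : SimpleGraph V) (f : V → V → Bool) : Prop :=
  (∀ u v, G.Adj u v → f u v = !f v u) ∧ ∀ u v, ¬ G.Adj u v → f u v = false

/-- The directed graph given by `f` contains no directed cycle. -/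
def OrientAcyclic {V : Type*} (f : V → V → Bool) : Prop :=
  ∀ v, ¬ Relation.TransGen (fun a b => f a b = true) v v

/-- The number of acyclic orientations of `G`. -/
noncomputable def numAcyclicOrientations {V : Type*} (G : SimpleGraph V) : ℕ :=
  Nat.card {f : V → V → Bool // IsOrientation G f ∧ OrientAcyclic f}

/-- The Stirling number of the second kind `S(n,k)`: the number of partitions of an
`n`-element set into `k` non-empty parts. -/
noncomputable def stirling2 (n k : ℕ) : ℕ :=
  Nat.card {P : Finpartition (Finset.univ : Finset (Fin n)) // P.parts.card = k}

/-- The row sum of a zero-one (Boolean) matrix: the number of `true` entries in row `i`. -/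
def rowSum {m n : ℕ} (M : Fin m → Fin n → Bool) (i : Fin m) : ℕ :=
  (Finset.univ.filter fun j => M i j = true).card

/-- The column sum of a zero-one (Boolean) matrix: the number of `true` entries in column `j`. -/
def colSum {m n : ℕ} (M : Fin m → Fin n → Bool) (j : Fin n) : ℕ :=
  (Finset.univ.filter fun i => M i j = true).card

/-- A zero-one matrix is lonesum if it is the unique zero-one matrix with its row sums and
column sums. -/
def IsLonesum {m n : ℕ} (M : Fin m → Fin n → Bool) : Prop :=
  ∀ N : Fin m → Fin n → Bool,
    (∀ i, rowSum N i = rowSum M i) → (∀ j, colSum N j = colSum M j) → N = M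



open Finset

-- general lemma

lemma card_equiv_fix {α β : Type*} [DecidableEq α] [DecidableEq β] [Fintype α] [Fintype β]
    (a₀ : α) (b₀ : β) (h : Fintype.card α = Fintype.card β) :
    Nat.card {e : α ≃ β // e a₀ = b₀} = (Fintype.card α - 1).factorial := by
  have E : {e : α ≃ β // e a₀ = b₀} ≃ ({a : α // a ≠ a₀} ≃ {b : β // b ≠ b₀}) := by
    refine
      { toFun := fun e => e.1.subtypeEquiv (fun a => ?_)
        invFun := fun E => ?_
        left_inv := ?_
        right_inv := ?_ }
    · constructor
      · intro ha hb
        exact ha (e.1.injective (hb.trans e.2.symm))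
      · intro hb ha
        exact hb (by rw [ha, e.2])
    · refine ⟨⟨fun a => if h : a = a₀ then b₀ else E ⟨a, h⟩,
        fun b => if h : b = b₀ then a₀ else E.symm ⟨b, h⟩, ?_, ?_⟩, by simp⟩
      · intro a
        by_cases ha : a = a₀
        · simp [ha]
        · simp only [dif_neg ha, dif_neg (E ⟨a, ha⟩).2]
          rw [Equiv.symm_apply_apply]
      · intro b
        by_cases hb : b = b₀
        · simp [hb]
        · simp only [dif_neg hb, dif_neg (E.symm ⟨b, hb⟩).2]
          rw [Equiv.apply_symm_apply]
    · rintro ⟨e, he⟩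
      ext a
      by_cases ha : a = a₀ <;> simp [Equiv.subtypeEquiv, ha, he]
    · intro E
      ext a
      simp [Equiv.subtypeEquiv, a.2]
  rw [Nat.card_congr E, Nat.card_eq_fintype_card]
  have h1 : Fintype.card {a : α // a ≠ a₀} = Fintype.card α - 1 := by
    rw [Fintype.card_subtype_compl, Fintype.card_subtype_eq]
  have h2 : Fintype.card {b : β // b ≠ b₀} = Fintype.card α - 1 := by
    rw [Fintype.card_subtype_compl, Fintype.card_subtype_eq, h]
  rw [Fintype.card_equiv (Fintype.equivOfCardEq (h1.trans h2.symm)), h1]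

section Part1

variable {N j : ℕ}

def fib (g : Fin (N + 1) → Fin (j + 1)) (t : Fin (j + 1)) : Finset (Fin (N + 1)) :=
  univ.filter (fun x => g x = t)

instance kerDecidable {α β : Type*} [DecidableEq β] (g : α → β) :
    DecidableRel (Setoid.ker g).r :=
  fun a b => decidable_of_iff (g a = g b) Iff.rfl

noncomputable def Pg (g : Fin (N + 1) → Fin (j + 1)) :
    Finpartition (univ : Finset (Fin (N + 1))) :=
  Finpartition.ofSetoid (Setoid.ker g)

lemma mem_part_Pg (g : Fin (N + 1) → Fin (j + 1)) (a b : Fin (N + 1)) :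
    b ∈ (Pg g).part a ↔ g a = g b :=
  Finpartition.mem_part_ofSetoid_iff_rel

lemma part_Pg (g : Fin (N + 1) → Fin (j + 1)) (a : Fin (N + 1)) :
    (Pg g).part a = fib g (g a) := by
  ext b
  rw [mem_part_Pg, fib, mem_filter]
  simp [eq_comm]

lemma parts_Pg {g : Fin (N + 1) → Fin (j + 1)} (hg : Function.Surjective g) :
    (Pg g).parts = univ.image (fib g) := by
  ext p
  constructor
  · intro hp
    obtain ⟨a, _, ha⟩ := (Pg g).part_surjOn hp
    exact mem_image.2 ⟨g a, mem_univ _, by rw [← part_Pg, ha]⟩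
  · intro hp
    obtain ⟨t, _, rfl⟩ := mem_image.1 hp
    obtain ⟨a, rfl⟩ := hg t
    rw [← part_Pg]
    exact (Pg g).part_mem.2 (mem_univ a)

lemma fib_inj {g : Fin (N + 1) → Fin (j + 1)} (hg : Function.Surjective g) :
    Function.Injective (fib g) := by
  intro t t' h
  obtain ⟨a, rfl⟩ := hg t
  have : a ∈ fib g (g a) := by simp [fib]
  rw [h] at this
  simp [fib] at this
  exact this

lemma card_parts_Pg {g : Fin (N + 1) → Fin (j + 1)} (hg : Function.Surjective g) :
    (Pg g).parts.card = j + 1 := by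
  rw [parts_Pg hg, Finset.card_image_of_injective _ (fib_inj hg), card_univ, Fintype.card_fin]

end Part1

lemma card_lab {N j : ℕ} (P : Finpartition (univ : Finset (Fin (N + 1))))
    (hP : P.parts.card = j + 1) :
    Nat.card {ℓ : Fin (j + 1) ≃ {p // p ∈ P.parts} // Fin.last N ∈ (ℓ 0).1} = j.factorial := by
  have hiff : ∀ ℓ : Fin (j + 1) ≃ {p // p ∈ P.parts},
      Fin.last N ∈ (ℓ 0).1 ↔ ℓ 0 = ⟨P.part (Fin.last N), P.part_mem.2 (mem_univ _)⟩ := by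
    intro ℓ
    constructor
    · intro h
      exact Subtype.ext (P.part_eq_of_mem (ℓ 0).2 h).symm
    · intro h
      rw [h]
      exact P.mem_part (mem_univ _)
  rw [Nat.card_congr (Equiv.subtypeEquivRight hiff),
    card_equiv_fix _ _ (by simp [Fintype.card_coe, hP])]
  simp

abbrev AT (N j : ℕ) : Type :=
  {g : Fin (N + 1) → Fin (j + 1) // Function.Surjective g ∧ g (Fin.last N) = 0}

abbrev BT (N j : ℕ) : Type :=
  Σ P : {P : Finpartition (univ : Finset (Fin (N + 1))) // P.parts.card = j + 1},
    {ℓ : Fin (j + 1) ≃ {p // p ∈ P.1.parts} // Fin.last N ∈ (ℓ 0).1}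

lemma card_hits (N j : ℕ) :
    Nat.card {f : Fin N → Fin (j + 1) // ∀ t, t ≠ 0 → ∃ i, f i = t}
      = j.factorial * stirling2 (N + 1) (j + 1) := by
  classical
  have e1 : {f : Fin N → Fin (j + 1) // ∀ t, t ≠ 0 → ∃ i, f i = t} ≃
      AT N j := by
    refine ⟨fun f => ⟨Fin.snoc f.1 0, ?_, ?_⟩, fun g => ⟨fun i => g.1 i.castSucc, ?_⟩, ?_, ?_⟩
    · intro t
      by_cases ht : t = 0
      · exact ⟨Fin.last N, by simp [ht]⟩
      · obtain ⟨i, hi⟩ := f.2 t ht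
        exact ⟨i.castSucc, by simp [hi]⟩
    · simp
    · intro t ht
      obtain ⟨x, hx⟩ := g.2.1 t
      have hxl : x ≠ Fin.last N := by
        rintro rfl
        rw [g.2.2] at hx
        exact ht hx.symm
      obtain ⟨i, rfl⟩ := Fin.exists_castSucc_eq.2 hxl
      exact ⟨i, hx⟩
    · intro f
      apply Subtype.ext
      funext i
      simp
    · intro g
      apply Subtype.ext
      funext x
      refine Fin.lastCases ?_ ?_ x
      · simp [g.2.2.symm]
      · intro i
        simp
  rw [Nat.card_congr e1]
  have parts_eq_image : ∀ P : Finpartition (univ : Finset (Fin (N + 1))),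
      P.parts = univ.image P.part := by
    intro P
    ext p
    constructor
    · intro hp
      obtain ⟨a, _, ha⟩ := P.part_surjOn hp
      exact mem_image.2 ⟨a, mem_univ _, ha⟩
    · intro hp
      obtain ⟨a, _, rfl⟩ := mem_image.1 hp
      exact P.part_mem.2 (mem_univ a)
  let φ : BT N j → (Fin (N + 1) → Fin (j + 1)) := fun b x =>
    b.2.1.symm ⟨b.1.1.part x, b.1.1.part_mem.2 (mem_univ x)⟩
  have hφpart : ∀ (b : BT N j) (x : Fin (N + 1)), (b.2.1 (φ b x)).1 = b.1.1.part x := by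
    intro b x
    show (b.2.1 (b.2.1.symm _)).1 = _
    rw [Equiv.apply_symm_apply]
  have hφmem : ∀ (b : BT N j) (x y : Fin (N + 1)), y ∈ b.1.1.part x ↔ φ b y = φ b x := by
    intro b x y
    rw [b.1.1.mem_part_iff_part_eq_part (mem_univ y) (mem_univ x)]
    constructor
    · intro h
      show b.2.1.symm _ = b.2.1.symm _
      congr 1
      exact Subtype.ext h
    · intro h
      have := congrArg (fun t => (b.2.1 t).1) h
      simpa [hφpart] using this
  have hφsurj : ∀ b : BT N j, Function.Surjective (φ b) := by
    intro b t
    obtain ⟨x, hx⟩ := b.1.1.nonempty_of_mem_parts (b.2.1 t).2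
    have hpart : b.1.1.part x = (b.2.1 t).1 := b.1.1.part_eq_of_mem (b.2.1 t).2 hx
    refine ⟨x, ?_⟩
    show b.2.1.symm _ = t
    rw [Equiv.symm_apply_eq]
    exact Subtype.ext hpart
  have hφlast : ∀ b : BT N j, φ b (Fin.last N) = 0 := by
    intro b
    show b.2.1.symm _ = 0
    rw [Equiv.symm_apply_eq]
    exact Subtype.ext (b.1.1.part_eq_of_mem (b.2.1 0).2 b.2.2)
  have hcard : Nat.card (BT N j) = Nat.card (AT N j) := by
    apply Nat.card_eq_of_bijective (fun b : BT N j => (⟨φ b, hφsurj b, hφlast b⟩ : AT N j))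
    constructor
    · rintro ⟨⟨P, hP⟩, ⟨ℓ, hℓ⟩⟩ ⟨⟨P', hP'⟩, ⟨ℓ', hℓ'⟩⟩ hbb
      have hφeq : φ ⟨⟨P, hP⟩, ⟨ℓ, hℓ⟩⟩ = φ ⟨⟨P', hP'⟩, ⟨ℓ', hℓ'⟩⟩ := by
        exact congrArg Subtype.val hbb
      have hpart : P.part = P'.part := by
        funext x
        ext y
        rw [show P.part x = (⟨⟨P, hP⟩, ⟨ℓ, hℓ⟩⟩ : BT N j).1.1.part x from rfl,
          hφmem ⟨⟨P, hP⟩, ⟨ℓ, hℓ⟩⟩ x y, hφeq, ← hφmem ⟨⟨P', hP'⟩, ⟨ℓ', hℓ'⟩⟩ x y]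
      have hPP : P = P' := by
        apply Finpartition.ext
        rw [parts_eq_image, parts_eq_image, hpart]
      subst hPP
      have hℓeq : ℓ = ℓ' := by
        apply Equiv.ext
        intro t
        obtain ⟨x, hx⟩ := hφsurj ⟨⟨P, hP⟩, ⟨ℓ, hℓ⟩⟩ t
        have hx' : φ ⟨⟨P, hP'⟩, ⟨ℓ', hℓ'⟩⟩ x = t := by rw [← hφeq]; exact hx
        apply Subtype.ext
        calc (ℓ t).1 = (ℓ (φ ⟨⟨P, hP⟩, ⟨ℓ, hℓ⟩⟩ x)).1 := by rw [hx]
          _ = P.part x := hφpart ⟨⟨P, hP⟩, ⟨ℓ, hℓ⟩⟩ x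
          _ = (ℓ' (φ ⟨⟨P, hP'⟩, ⟨ℓ', hℓ'⟩⟩ x)).1 := (hφpart ⟨⟨P, hP'⟩, ⟨ℓ', hℓ'⟩⟩ x).symm
          _ = (ℓ' t).1 := by rw [hx']
      subst hℓeq
      simp
    · rintro ⟨g, hgs, hgl⟩
      have hparts : ∀ t : Fin (j + 1), fib g t ∈ (Pg g).parts := by
        intro t
        rw [parts_Pg hgs]
        exact mem_image_of_mem _ (mem_univ t)
      have hbij : Function.Bijective
          (fun t : Fin (j + 1) => (⟨fib g t, hparts t⟩ : {p // p ∈ (Pg g).parts})) := by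
        constructor
        · intro t t' h
          exact fib_inj hgs (congrArg Subtype.val h)
        · rintro ⟨p, hp⟩
          rw [parts_Pg hgs] at hp
          obtain ⟨t, _, rfl⟩ := mem_image.1 hp
          exact ⟨t, rfl⟩
      let ℓ : Fin (j + 1) ≃ {p // p ∈ (Pg g).parts} := Equiv.ofBijective _ hbij
      have hℓapp : ∀ t, (ℓ t).1 = fib g t := fun t => rfl
      have hℓ0 : Fin.last N ∈ (ℓ 0).1 := by
        rw [hℓapp]
        simp [fib, hgl]
      refine ⟨⟨⟨Pg g, card_parts_Pg hgs⟩, ⟨ℓ, hℓ0⟩⟩, ?_⟩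
      apply Subtype.ext
      funext x
      show ℓ.symm _ = g x
      rw [Equiv.symm_apply_eq]
      apply Subtype.ext
      rw [hℓapp]
      exact part_Pg g x
  rw [← hcard, Nat.card_eq_fintype_card]
  rw [show Fintype.card (BT N j) = _ from Fintype.card_sigma]
  have hfib : ∀ P : {P : Finpartition (univ : Finset (Fin (N + 1))) // P.parts.card = j + 1},
      Fintype.card {ℓ : Fin (j + 1) ≃ {p // p ∈ P.1.parts} // Fin.last N ∈ (ℓ 0).1}
        = j.factorial := by
    intro P
    rw [← Nat.card_eq_fintype_card]
    exact card_lab P.1 P.2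
  rw [Finset.sum_congr rfl (fun P _ => hfib P), Finset.sum_const, card_univ, smul_eq_mul]
  rw [stirling2, Nat.card_eq_fintype_card, mul_comm]


section Part2

variable {m n : ℕ}

def tr (M : Fin m → Fin n → Bool) : Fin n → Fin m → Bool := fun c i => M i c

lemma colSum_tr (M : Fin m → Fin n → Bool) : colSum M = rowSum (tr M) := rfl

lemma rowSum_tr (M : Fin m → Fin n → Bool) : rowSum M = colSum (tr M) := rfl

def chainP (M : Fin m → Fin n → Bool) : Prop :=
  ∀ i i' c c', M i c = true → M i' c' = true → M i c' = true ∨ M i' c = true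

lemma chainP_tr {M : Fin m → Fin n → Bool} (h : chainP M) : chainP (tr M) :=
  fun c c' i i' h1 h2 => (h i i' c c' h1 h2).symm

lemma card_filter_swap {α : Type*} [Fintype α] [DecidableEq α] (h h' : α → Bool) (c c' : α)
    (hne : c ≠ c') (hc : h c = h' c') (hc' : h c' = h' c)
    (hrest : ∀ y, y ≠ c → y ≠ c' → h y = h' y) :
    (univ.filter fun y => h y = true).card = (univ.filter fun y => h' y = true).card := by
  have key : ∀ f : α → Bool, (univ.filter fun y => f y = true).card
      = (if f c then 1 else 0) + (if f c' then 1 else 0)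
        + ∑ y ∈ univ \ {c, c'}, (if f y then 1 else 0) := by
    intro f
    rw [Finset.card_filter]
    rw [← Finset.sum_sdiff (subset_univ ({c, c'} : Finset α))]
    rw [Finset.sum_pair hne]
    ring
  rw [key h, key h']
  have h1 : ∑ y ∈ univ \ {c, c'}, (if h y then 1 else 0)
      = ∑ y ∈ univ \ {c, c'}, (if h' y then 1 else 0) := by
    apply Finset.sum_congr rfl
    intro y hy
    simp only [mem_sdiff, mem_insert, mem_singleton] at hy
    rw [hrest y (fun hyc => hy.2 (Or.inl hyc)) (fun hyc => hy.2 (Or.inr hyc))]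
  rw [h1, hc, hc']
  ring

lemma chain_of_lonesum {M : Fin m → Fin n → Bool} (hM : IsLonesum M) : chainP M := by
  intro i i' c c' hic hi'c'
  by_contra hcon
  push_neg at hcon
  obtain ⟨hic', hi'c⟩ := hcon
  have hic' : M i c' = false := by simpa using hic'
  have hi'c : M i' c = false := by simpa using hi'c
  have hii : i ≠ i' := by
    rintro rfl
    rw [hi'c'] at hic'
    simp at hic'
  have hcc : c ≠ c' := by
    rintro rfl
    rw [hic] at hic'
    simp at hic'
  set N : Fin m → Fin n → Bool := fun x y =>
    if x = i then (if y = c then false else if y = c' then true else M x y)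
    else if x = i' then (if y = c then true else if y = c' then false else M x y)
    else M x y with hN
  have hrow : ∀ x, rowSum N x = rowSum M x := by
    intro x
    by_cases hx : x = i
    · subst hx
      apply card_filter_swap _ _ c c' hcc
      · simp [hN, hic']
      · simp [hN, hcc, Ne.symm hcc, hic]
      · intro y h1 h2
        simp [hN, h1, h2]
    · by_cases hx' : x = i'
      · subst hx'
        apply card_filter_swap _ _ c c' hcc
        · simp [hN, hx, hi'c']
        · simp [hN, hx, hcc, Ne.symm hcc, hi'c]
        · intro y h1 h2
          simp [hN, hx, h1, h2]
      · unfold rowSum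
        congr 1
        apply Finset.filter_congr
        intro y _
        simp [hN, hx, hx']
  have hcol : ∀ y, colSum N y = colSum M y := by
    intro y
    by_cases hy : y = c
    · subst hy
      apply card_filter_swap _ _ i i' hii
      · simp [hN, hi'c]
      · simp [hN, hii.symm, hic]
      · intro x h1 h2
        simp [hN, h1, h2]
    · by_cases hy' : y = c'
      · subst hy'
        apply card_filter_swap _ _ i i' hii
        · simp [hN, hy, hi'c']
        · simp [hN, hii.symm, hy, hic']
        · intro x h1 h2
          simp [hN, h1, h2, hy]
      · unfold colSum
        congr 1
        apply Finset.filter_congr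
        intro x _
        simp [hN, hy, hy']
  have := hM N hrow hcol
  have hNic : N i c = false := by simp [hN]
  rw [this] at hNic
  rw [hic] at hNic
  simp at hNic


def rsupp (M : Fin m → Fin n → Bool) (i : Fin m) : Finset (Fin n) :=
  univ.filter fun c => M i c = true

lemma rowSum_eq_card (M : Fin m → Fin n → Bool) (i : Fin m) :
    rowSum M i = (rsupp M i).card := rfl

lemma row_subset {M : Fin m → Fin n → Bool} (hch : chainP M) {i i' : Fin m}
    (h : rowSum M i ≤ rowSum M i') : ∀ c, M i c = true → M i' c = true := by
  intro c hc
  by_contra hc'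
  rw [Bool.not_eq_true] at hc'
  have hsub : rsupp M i' ⊆ rsupp M i := by
    intro c' hcin
    simp only [rsupp, mem_filter, mem_univ, true_and] at hcin ⊢
    rcases hch i i' c c' hc hcin with h1 | h2
    · exact h1
    · rw [h2] at hc'
      simp at hc'
  have hins : insert c (rsupp M i') ⊆ rsupp M i := by
    apply insert_subset _ hsub
    simp [rsupp, hc]
  have hcard := Finset.card_le_card hins
  rw [Finset.card_insert_of_notMem (by simp [rsupp, hc'])] at hcard
  rw [rowSum_eq_card, rowSum_eq_card] at h
  omega

def rset (M : Fin m → Fin n → Bool) : Finset ℕ := (univ.image (rowSum M)).erase 0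

def kOf (M : Fin m → Fin n → Bool) : ℕ := (rset M).card

def fOf (M : Fin m → Fin n → Bool) (i : Fin m) : ℕ :=
  ((rset M).filter (· ≤ rowSum M i)).card

noncomputable def muOf (M : Fin m → Fin n → Bool) (c : Fin n) : ℕ :=
  if h : ((rsupp (tr M) c).image (rowSum M)).Nonempty then
    ((rsupp (tr M) c).image (rowSum M)).min' h else 0

lemma csupp_nonempty {M : Fin m → Fin n → Bool} {c : Fin n} (h : colSum M c ≠ 0) :
    (rsupp (tr M) c).Nonempty := by
  rw [← Finset.card_pos]
  have : colSum M c = (rsupp (tr M) c).card := rfl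
  omega

lemma muOf_le {M : Fin m → Fin n → Bool} {c : Fin n} {i : Fin m} (h : M i c = true) :
    muOf M c ≤ rowSum M i := by
  have hi : i ∈ rsupp (tr M) c := by simp [rsupp]; exact h
  have hne : ((rsupp (tr M) c).image (rowSum M)).Nonempty :=
    ⟨rowSum M i, mem_image_of_mem _ hi⟩
  rw [muOf, dif_pos hne]
  exact Finset.min'_le _ _ (mem_image_of_mem _ hi)

lemma muOf_attained {M : Fin m → Fin n → Bool} {c : Fin n} (h : colSum M c ≠ 0) :
    ∃ i, M i c = true ∧ rowSum M i = muOf M c := by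
  have hne : ((rsupp (tr M) c).image (rowSum M)).Nonempty :=
    (csupp_nonempty h).image _
  rw [muOf, dif_pos hne]
  obtain ⟨i, hi, hival⟩ := mem_image.1 (Finset.min'_mem _ hne)
  simp only [rsupp, mem_filter, mem_univ, true_and] at hi
  exact ⟨i, hi, hival⟩

lemma supp_iff {M : Fin m → Fin n → Bool} (hch : chainP M) {c : Fin n}
    (h : colSum M c ≠ 0) (i : Fin m) : M i c = true ↔ muOf M c ≤ rowSum M i := by
  constructor
  · exact fun hi => muOf_le hi
  · intro hle
    obtain ⟨i0, hi0, hval⟩ := muOf_attained h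
    exact row_subset hch (by omega) c hi0

lemma rowSum_ne_zero {M : Fin m → Fin n → Bool} {i : Fin m} {c : Fin n}
    (h : M i c = true) : rowSum M i ≠ 0 := by
  have : c ∈ rsupp M i := by simp [rsupp, h]
  have := Finset.card_pos.2 ⟨c, this⟩
  rw [rowSum_eq_card]
  omega

lemma mem_rset {M : Fin m → Fin n → Bool} {i : Fin m} (h : rowSum M i ≠ 0) :
    rowSum M i ∈ rset M :=
  mem_erase.2 ⟨h, mem_image_of_mem _ (mem_univ i)⟩

lemma muOf_mem {M : Fin m → Fin n → Bool} {c : Fin n} (h : colSum M c ≠ 0) :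
    muOf M c ∈ rset M := by
  obtain ⟨i, hi, hval⟩ := muOf_attained h
  exact hval ▸ mem_rset (rowSum_ne_zero hi)

lemma muOf_lt {M : Fin m → Fin n → Bool} (hch : chainP M) {c c' : Fin n}
    (h : colSum M c ≠ 0) (h2 : colSum M c < colSum M c') : muOf M c' < muOf M c := by
  have h' : colSum M c' ≠ 0 := by omega
  -- csupp c ⊆ csupp c', pick i' in difference
  have hsub : rsupp (tr M) c ⊆ rsupp (tr M) c' := by
    intro i hi
    simp only [rsupp, mem_filter, mem_univ, true_and] at hi ⊢
    exact row_subset (chainP_tr hch) (le_of_lt h2) i hi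
  have hlt : (rsupp (tr M) c).card < (rsupp (tr M) c').card := h2
  obtain ⟨i', hi'mem, hi'not⟩ : ∃ i', i' ∈ rsupp (tr M) c' ∧ i' ∉ rsupp (tr M) c := by
    have hns : ¬ (rsupp (tr M) c' ⊆ rsupp (tr M) c) := fun hs => by
      have := Finset.card_le_card hs
      omega
    rcases Finset.not_subset.1 hns with ⟨i', h1, h2⟩
    exact ⟨i', h1, h2⟩
  have hMi' : M i' c' = true := by
    simp only [rsupp, mem_filter, mem_univ, true_and] at hi'mem
    exact hi'mem
  have hle : muOf M c' ≤ rowSum M i' := muOf_le hMi'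
  obtain ⟨i0, hi0, hval⟩ := muOf_attained h
  have hlt2 : rowSum M i' < rowSum M i0 := by
    by_contra hcon
    push_neg at hcon
    have := row_subset hch hcon c hi0
    exact hi'not (by simp [rsupp]; exact this)
  omega

lemma muOf_congr {M : Fin m → Fin n → Bool} (hch : chainP M) {c c' : Fin n}
    (h : colSum M c ≠ 0) (he : colSum M c = colSum M c') : muOf M c = muOf M c' := by
  have hsupp : rsupp (tr M) c = rsupp (tr M) c' := by
    apply Finset.Subset.antisymm
    · intro i hi
      simp only [rsupp, mem_filter, mem_univ, true_and] at hi ⊢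
      exact row_subset (chainP_tr hch) (le_of_eq he) i hi
    · intro i hi
      simp only [rsupp, mem_filter, mem_univ, true_and] at hi ⊢
      exact row_subset (chainP_tr hch) (le_of_eq he.symm) i hi
  rw [muOf, muOf, hsupp]

noncomputable def rhoOf (M : Fin m → Fin n → Bool) (v : ℕ) : ℕ :=
  if h : ∃ i, rowSum M i = v then muOf (tr M) h.choose else 0

lemma rhoOf_eq {M : Fin m → Fin n → Bool} (hch : chainP M) {i : Fin m}
    (h : rowSum M i ≠ 0) : rhoOf M (rowSum M i) = muOf (tr M) i := by
  have hex : ∃ i', rowSum M i' = rowSum M i := ⟨i, rfl⟩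
  rw [rhoOf, dif_pos hex]
  apply muOf_congr (chainP_tr hch)
  · show rowSum M hex.choose ≠ 0
    rw [hex.choose_spec]
    exact h
  · exact hex.choose_spec

lemma exists_row_of_mem_rset {M : Fin m → Fin n → Bool} {v : ℕ} (hv : v ∈ rset M) :
    v ≠ 0 ∧ ∃ i, rowSum M i = v := by
  rw [rset, mem_erase, mem_image] at hv
  obtain ⟨hv0, i, _, hi⟩ := hv
  exact ⟨hv0, i, hi⟩

lemma rhoOf_mem {M : Fin m → Fin n → Bool} (hch : chainP M) {v : ℕ} (hv : v ∈ rset M) :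
    rhoOf M v ∈ rset (tr M) := by
  obtain ⟨hv0, i, rfl⟩ := exists_row_of_mem_rset hv
  rw [rhoOf_eq hch hv0]
  exact muOf_mem (c := i) (M := tr M) hv0

lemma rhoOf_anti {M : Fin m → Fin n → Bool} (hch : chainP M) {v v' : ℕ}
    (hv : v ∈ rset M) (hv' : v' ∈ rset M) (h : v < v') : rhoOf M v' < rhoOf M v := by
  obtain ⟨hv0, i, rfl⟩ := exists_row_of_mem_rset hv
  obtain ⟨hv0', i', rfl⟩ := exists_row_of_mem_rset hv'
  rw [rhoOf_eq hch hv0, rhoOf_eq hch hv0']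
  apply muOf_lt (chainP_tr hch)
  · exact hv0
  · exact h

lemma rhoOf_injOn {M : Fin m → Fin n → Bool} (hch : chainP M) {s : Finset ℕ}
    (hs : s ⊆ rset M) : Set.InjOn (rhoOf M) s := by
  intro a ha b hb hab
  by_contra hne
  rcases lt_or_gt_of_ne hne with hlt | hlt
  · exact absurd hab (by have := rhoOf_anti hch (hs ha) (hs hb) hlt; omega)
  · exact absurd hab (by have := rhoOf_anti hch (hs hb) (hs ha) hlt; omega)

lemma rhoOf_le {M : Fin m → Fin n → Bool} (hch : chainP M) {i : Fin m} {c : Fin n}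
    (h : M i c = true) : rhoOf M (rowSum M i) ≤ colSum M c := by
  rw [rhoOf_eq hch (rowSum_ne_zero h)]
  exact muOf_le (M := tr M) (by simpa [tr] using h)

lemma colSum_ne_zero {M : Fin m → Fin n → Bool} {i : Fin m} {c : Fin n}
    (h : M i c = true) : colSum M c ≠ 0 :=
  rowSum_ne_zero (M := tr M) (show tr M c i = true from h)

lemma k_split (M : Fin m → Fin n → Bool) (i : Fin m) :
    kOf M = fOf M i + ((rset M).filter (fun v => rowSum M i < v)).card := by
  have h := Finset.card_filter_add_card_filter_not (s := rset M)
    (p := (· ≤ rowSum M i))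
  have h2 : (rset M).filter (fun a => ¬ a ≤ rowSum M i)
      = (rset M).filter (fun v => rowSum M i < v) := by
    apply Finset.filter_congr
    intro v _
    simp [not_le]
  rw [kOf, fOf, ← h, h2]

lemma thr_iff {M : Fin m → Fin n → Bool} (hch : chainP M) (i : Fin m) (c : Fin n) :
    (M i c = true) ↔
      ((rset M).filter (fun v => rowSum M i < v)).card < fOf (tr M) c := by
  show _ ↔ _ < ((rset (tr M)).filter (· ≤ rowSum (tr M) c)).card
  by_cases hc0 : colSum M c = 0
  · have hMf : M i c = false := by
      by_contra hcon
      rw [Bool.not_eq_false] at hcon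
      exact colSum_ne_zero hcon hc0
    have hT : ((rset (tr M)).filter (· ≤ rowSum (tr M) c)).card = 0 := by
      rw [Finset.card_eq_zero]
      rw [Finset.filter_eq_empty_iff]
      intro u hu
      have := (exists_row_of_mem_rset hu).1
      have hcc : rowSum (tr M) c = 0 := hc0
      omega
    rw [hT, hMf]
    simp
  · constructor
    · intro hic
      have hmuS : muOf M c ∉ (rset M).filter (fun v => rowSum M i < v) := by
        rw [mem_filter]
        rintro ⟨-, hlt⟩
        have := muOf_le hic
        omega
      have hsubS : insert (muOf M c) ((rset M).filter (fun v => rowSum M i < v)) ⊆ rset M :=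
        insert_subset (muOf_mem hc0) (filter_subset _ _)
      have hmaps : ∀ v ∈ insert (muOf M c) ((rset M).filter (fun v => rowSum M i < v)),
          rhoOf M v ∈ (rset (tr M)).filter (· ≤ rowSum (tr M) c) := by
        intro v hv
        have hvr : v ∈ rset M := hsubS hv
        obtain ⟨hv0, iv, hiv⟩ := exists_row_of_mem_rset hvr
        have hmuv : muOf M c ≤ v := by
          rcases mem_insert.1 hv with rfl | hvS
          · exact le_rfl
          · have h1 := (mem_filter.1 hvS).2
            have h2 := muOf_le hic
            omega
        have hMivc : M iv c = true := (supp_iff hch hc0 iv).2 (by omega)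
        have h1 : rhoOf M v ≤ colSum M c := by
          rw [← hiv]
          exact rhoOf_le hch hMivc
        exact mem_filter.2 ⟨rhoOf_mem hch hvr, h1⟩
      have hcardle := Finset.card_le_card_of_injOn _ hmaps
        ((rhoOf_injOn hch hsubS))
      rw [Finset.card_insert_of_notMem hmuS] at hcardle
      omega
    · intro hlt
      by_contra hic
      rw [Bool.not_eq_true] at hic
      have hrlt : rowSum M i < muOf M c := by
        by_contra hcon
        push_neg at hcon
        have := (supp_iff hch hc0 i).2 hcon
        rw [hic] at this
        simp at this
      have hmaps : ∀ u ∈ (rset (tr M)).filter (· ≤ rowSum (tr M) c),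
          rhoOf (tr M) u ∈ (rset M).filter (fun v => rowSum M i < v) := by
        intro u hu
        obtain ⟨hur, hule⟩ := mem_filter.1 hu
        obtain ⟨hu0, cu, hcu⟩ := exists_row_of_mem_rset hur
        have h1 : rhoOf (tr M) u ∈ rset M := rhoOf_mem (chainP_tr hch) hur
        have h2 : muOf M c ≤ rhoOf (tr M) u := by
          rw [← hcu, rhoOf_eq (chainP_tr hch) (by rw [hcu]; exact hu0)]
          show muOf M c ≤ muOf M cu
          have hcule : colSum M cu ≤ colSum M c := by
            have e1 : colSum M cu = rowSum (tr M) cu := rfl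
            have e2 : colSum M c = rowSum (tr M) c := rfl
            omega
          rcases eq_or_lt_of_le hcule with he | hlt2
          · exact le_of_eq (muOf_congr hch hc0 he.symm)
          · have hcune : colSum M cu ≠ 0 := by
              have e1 : colSum M cu = u := hcu
              omega
            exact le_of_lt (muOf_lt hch hcune hlt2)
        exact mem_filter.2 ⟨h1, by omega⟩
      have hinj := rhoOf_injOn (chainP_tr hch) (filter_subset (· ≤ rowSum (tr M) c) (rset (tr M)))
      have := Finset.card_le_card_of_injOn _ hmaps hinj
      omega

lemma kOf_tr {M : Fin m → Fin n → Bool} (hch : chainP M) : kOf (tr M) = kOf M := by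
  apply le_antisymm
  · apply Finset.card_le_card_of_injOn (rhoOf (tr M))
    · intro v hv
      exact rhoOf_mem (chainP_tr hch) hv
    · exact rhoOf_injOn (chainP_tr hch) (Finset.Subset.refl _)
  · apply Finset.card_le_card_of_injOn (rhoOf M)
    · intro v hv
      exact rhoOf_mem hch hv
    · exact rhoOf_injOn hch (Finset.Subset.refl _)

lemma fOf_le (M : Fin m → Fin n → Bool) (i : Fin m) : fOf M i ≤ kOf M :=
  Finset.card_le_card (filter_subset _ _)

lemma fin_filter_le_card {K r : ℕ} (h : r < K) :
    ((univ : Finset (Fin K)).filter (fun (i : Fin K) => (i : ℕ) ≤ r)).card = r + 1 := by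
  rw [← Finset.card_range (r + 1)]
  apply Finset.card_bij (fun (i : Fin K) _ => (i : ℕ))
  · intro a ha
    simp only [mem_filter, mem_univ, true_and] at ha
    simp only [mem_range]
    omega
  · intro a _ b _ hab
    exact Fin.ext hab
  · intro b hb
    simp only [mem_range] at hb
    refine ⟨⟨b, by omega⟩, ?_, rfl⟩
    simp only [mem_filter, mem_univ, true_and]
    omega

lemma exists_filter_le_card (s : Finset ℕ) (t : ℕ) (h1 : 1 ≤ t) (h2 : t ≤ s.card) :
    ∃ v ∈ s, (s.filter (· ≤ v)).card = t := by
  set e := s.orderIsoOfFin rfl with he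
  set idx : Fin s.card := ⟨t - 1, by omega⟩ with hidx
  refine ⟨(e idx : ℕ), (e idx).2, ?_⟩
  have key : (s.filter (· ≤ (e idx : ℕ))).card
      = ((univ : Finset (Fin s.card)).filter (fun (i : Fin s.card) => (i : ℕ) ≤ t - 1)).card := by
    apply Finset.card_bij (fun w hw => e.symm ⟨w, (mem_filter.1 hw).1⟩)
    · intro w hw
      simp only [mem_filter, mem_univ, true_and]
      have hle : (⟨w, (mem_filter.1 hw).1⟩ : {x // x ∈ s}) ≤ e idx := (mem_filter.1 hw).2
      have h3 := e.symm.le_iff_le.2 hle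
      rw [e.symm_apply_apply] at h3
      exact h3
    · intro w hw w' hw' heq
      have := congrArg e heq
      rw [e.apply_symm_apply, e.apply_symm_apply] at this
      exact congrArg Subtype.val this
    · intro i hi
      simp only [mem_filter, mem_univ, true_and] at hi
      refine ⟨(e i : ℕ), ?_, ?_⟩
      · simp only [mem_filter]
        refine ⟨(e i).2, ?_⟩
        have : i ≤ idx := by
          rw [Fin.le_def]
          exact hi
        exact e.le_iff_le.2 this
      · have h4 : (⟨(e i : ℕ), (e i).2⟩ : {x // x ∈ s}) = e i := Subtype.ext rfl
        rw [h4, e.symm_apply_apply]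
  rw [key, fin_filter_le_card (show t - 1 < s.card by omega)]
  omega

lemma fOf_surj (M : Fin m → Fin n → Bool) {t : ℕ} (h1 : 1 ≤ t) (h2 : t ≤ kOf M) :
    ∃ i, fOf M i = t := by
  obtain ⟨v, hv, hcard⟩ := exists_filter_le_card (rset M) t h1 h2
  obtain ⟨hv0, i, rfl⟩ := exists_row_of_mem_rset hv
  exact ⟨i, hcard⟩

lemma kOf_le (M : Fin m → Fin n → Bool) : kOf M ≤ m :=
  calc (rset M).card ≤ (univ.image (rowSum M)).card := Finset.card_le_card (erase_subset _ _)
    _ ≤ (univ : Finset (Fin m)).card := Finset.card_image_le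
    _ = m := by simp

def thr (j : ℕ) (f : Fin m → Fin (j + 1)) (g : Fin n → Fin (j + 1)) :
    Fin m → Fin n → Bool :=
  fun i c => decide (j < (f i : ℕ) + (g c : ℕ))

def hits {K : ℕ} {α : Type*} (f : α → Fin (K + 1)) : Prop := ∀ t, t ≠ 0 → ∃ i, f i = t

lemma tr_thr (j : ℕ) (f : Fin m → Fin (j + 1)) (g : Fin n → Fin (j + 1)) :
    tr (thr j f g) = thr j g f := by
  funext c i
  exact decide_eq_decide.2 (by omega)

def Rg {n : ℕ} (j : ℕ) (g : Fin n → Fin (j + 1)) (t : ℕ) : ℕ :=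
  (univ.filter fun c => j < (g c : ℕ) + t).card

lemma rowSum_thr (j : ℕ) (f : Fin m → Fin (j + 1)) (g : Fin n → Fin (j + 1)) (i : Fin m) :
    rowSum (thr j f g) i = Rg j g (f i) := by
  unfold rowSum Rg thr
  congr 1
  apply Finset.filter_congr
  intro c _
  simp only [decide_eq_true_eq]
  constructor <;> omega

lemma Rg_zero {j : ℕ} (g : Fin n → Fin (j + 1)) : Rg j g 0 = 0 := by
  rw [Rg, Finset.card_eq_zero, Finset.filter_eq_empty_iff]
  intro c _
  have := (g c).isLt
  omega

lemma Rg_lt {j : ℕ} {g : Fin n → Fin (j + 1)} (hg : hits g) {t t' : ℕ}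
    (ht : t < t') (ht' : t' ≤ j) : Rg j g t < Rg j g t' := by
  apply Finset.card_lt_card
  rw [Finset.ssubset_iff_of_subset (fun c hc => by
    simp only [mem_filter] at hc ⊢
    exact ⟨hc.1, by omega⟩)]
  obtain ⟨c0, hc0⟩ := hg ⟨j - t' + 1, by omega⟩ (by
    intro hzero
    have := congrArg Fin.val hzero
    simp at this)
  refine ⟨c0, ?_, ?_⟩
  · simp only [mem_filter, mem_univ, true_and, hc0]
    omega
  · simp only [mem_filter, mem_univ, true_and, hc0]
    push_neg
    omega

lemma Rg_le {j : ℕ} {g : Fin n → Fin (j + 1)} (hg : hits g) {t t' : ℕ}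
    (ht : t ≤ t') (ht' : t' ≤ j) : Rg j g t ≤ Rg j g t' := by
  rcases eq_or_lt_of_le ht with rfl | hlt
  · exact le_rfl
  · exact le_of_lt (Rg_lt hg hlt ht')

lemma rset_thr {j : ℕ} {f : Fin m → Fin (j + 1)} {g : Fin n → Fin (j + 1)}
    (hf : hits f) (hg : hits g) :
    rset (thr j f g) = (Finset.Icc 1 j).image (Rg j g) := by
  ext x
  constructor
  · intro hx
    rw [rset, mem_erase, mem_image] at hx
    obtain ⟨hx0, i, -, hi⟩ := hx
    rw [rowSum_thr] at hi
    by_cases hfi : (f i : ℕ) = 0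
    · rw [hfi] at hi
      rw [Rg_zero] at hi
      omega
    · exact mem_image.2 ⟨(f i : ℕ), by
        simp only [Finset.mem_Icc]
        have := (f i).isLt
        omega, hi⟩
  · intro hx
    obtain ⟨t, ht, rfl⟩ := mem_image.1 hx
    simp only [Finset.mem_Icc] at ht
    obtain ⟨i, hi⟩ := hf ⟨t, by omega⟩ (by
      intro hzero
      have := congrArg Fin.val hzero
      simp at this
      omega)
    rw [rset, mem_erase]
    constructor
    · have := Rg_lt hg (show 0 < t by omega) ht.2
      rw [Rg_zero] at this
      omega
    · refine mem_image.2 ⟨i, mem_univ _, ?_⟩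
      rw [rowSum_thr, hi]

lemma Rg_injOn {j : ℕ} {g : Fin n → Fin (j + 1)} (hg : hits g) :
    Set.InjOn (Rg j g) (Finset.Icc 1 j) := by
  intro a ha b hb hab
  simp only [Finset.coe_Icc, Set.mem_Icc] at ha hb
  by_contra hne
  rcases lt_or_gt_of_ne hne with hlt | hlt
  · have := Rg_lt hg hlt hb.2
    omega
  · have := Rg_lt hg hlt ha.2
    omega

lemma kOf_thr {j : ℕ} {f : Fin m → Fin (j + 1)} {g : Fin n → Fin (j + 1)}
    (hf : hits f) (hg : hits g) : kOf (thr j f g) = j := by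
  rw [kOf, rset_thr hf hg, Finset.card_image_of_injOn (Rg_injOn hg), Nat.card_Icc]
  omega

lemma fOf_thr {j : ℕ} {f : Fin m → Fin (j + 1)} {g : Fin n → Fin (j + 1)}
    (hf : hits f) (hg : hits g) (i : Fin m) : fOf (thr j f g) i = (f i : ℕ) := by
  rw [fOf, rset_thr hf hg, rowSum_thr]
  have himg : ((Finset.Icc 1 j).image (Rg j g)).filter (· ≤ Rg j g (f i))
      = ((Finset.Icc 1 j).filter (fun t => Rg j g t ≤ Rg j g (f i))).image (Rg j g) := by
    rw [Finset.filter_image]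
  rw [himg]
  have hset : (Finset.Icc 1 j).filter (fun t => Rg j g t ≤ Rg j g (f i))
      = Finset.Icc 1 (f i : ℕ) := by
    ext t
    simp only [mem_filter, Finset.mem_Icc]
    constructor
    · rintro ⟨⟨h1, h2⟩, h3⟩
      refine ⟨h1, ?_⟩
      by_contra hcon
      push_neg at hcon
      have := Rg_lt hg hcon h2
      omega
    · rintro ⟨h1, h2⟩
      have hfij : (f i : ℕ) ≤ j := by
        have := (f i).isLt
        omega
      exact ⟨⟨h1, by omega⟩, Rg_le hg h2 hfij⟩
  rw [hset, Finset.card_image_of_injOn ((Rg_injOn hg).mono (by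
    intro x hx
    simp only [Finset.coe_Icc, Set.mem_Icc] at hx ⊢
    have := (f i).isLt
    omega)), Nat.card_Icc]
  omega

lemma rowSum_eq_sum (M : Fin m → Fin n → Bool) (i : Fin m) :
    rowSum M i = ∑ c, (M i c).toNat := by
  rw [rowSum, Finset.card_filter]
  apply Finset.sum_congr rfl
  intro c _
  cases M i c <;> simp

lemma colSum_eq_sum (M : Fin m → Fin n → Bool) (c : Fin n) :
    colSum M c = ∑ i, (M i c).toNat := by
  rw [colSum, Finset.card_filter]
  apply Finset.sum_congr rfl
  intro i _
  cases M i c <;> simp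

lemma thr_lonesum (j : ℕ) (f : Fin m → Fin (j + 1)) (g : Fin n → Fin (j + 1)) :
    IsLonesum (thr j f g) := by
  intro N hrow hcol
  have hrowZ : ∀ i, ∑ c, (((thr j f g) i c).toNat : ℤ) - ∑ c, ((N i c).toNat : ℤ) = 0 := by
    intro i
    have h := hrow i
    rw [rowSum_eq_sum, rowSum_eq_sum] at h
    have : (∑ c, ((N i c).toNat : ℤ)) = ∑ c, (((thr j f g) i c).toNat : ℤ) := by
      exact_mod_cast congrArg (fun x : ℕ => (x : ℤ)) h
    omega
  have hcolZ : ∀ c, ∑ i, (((thr j f g) i c).toNat : ℤ) - ∑ i, ((N i c).toNat : ℤ) = 0 := by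
    intro c
    have h := hcol c
    rw [colSum_eq_sum, colSum_eq_sum] at h
    have : (∑ i, ((N i c).toNat : ℤ)) = ∑ i, (((thr j f g) i c).toNat : ℤ) := by
      exact_mod_cast congrArg (fun x : ℕ => (x : ℤ)) h
    omega
  set b : Fin m → Fin n → ℤ := fun i c => (((thr j f g) i c).toNat : ℤ) with hb
  set a : Fin m → Fin n → ℤ := fun i c => (((N i c).toNat : ℤ)) with ha
  have S0 : ∑ i, ∑ c, (b i c - a i c) = 0 := by
    apply Finset.sum_eq_zero
    intro i _
    rw [Finset.sum_sub_distrib]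
    exact hrowZ i
  have Sf : ∑ i, ∑ c, (b i c - a i c) * ((f i : ℕ) : ℤ) = 0 := by
    apply Finset.sum_eq_zero
    intro i _
    rw [← Finset.sum_mul, Finset.sum_sub_distrib]
    rw [hrowZ i]
    ring
  have Sg : ∑ i, ∑ c, (b i c - a i c) * ((g c : ℕ) : ℤ) = 0 := by
    rw [Finset.sum_comm]
    apply Finset.sum_eq_zero
    intro c _
    rw [← Finset.sum_mul, Finset.sum_sub_distrib]
    rw [hcolZ c]
    ring
  have S3 : ∑ i, ∑ c, (b i c - a i c) * (((f i : ℕ) : ℤ) + ((g c : ℕ) : ℤ) - (j : ℤ)) = 0 := by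
    have expand : ∀ i c, (b i c - a i c) * (((f i : ℕ) : ℤ) + ((g c : ℕ) : ℤ) - (j : ℤ))
        = (b i c - a i c) * ((f i : ℕ) : ℤ) + (b i c - a i c) * ((g c : ℕ) : ℤ)
          - (j : ℤ) * (b i c - a i c) := by
      intro i c
      ring
    calc ∑ i, ∑ c, (b i c - a i c) * (((f i : ℕ) : ℤ) + ((g c : ℕ) : ℤ) - (j : ℤ))
        = ∑ i, ∑ c, ((b i c - a i c) * ((f i : ℕ) : ℤ)
            + (b i c - a i c) * ((g c : ℕ) : ℤ) - (j : ℤ) * (b i c - a i c)) := by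
          apply Finset.sum_congr rfl
          intro i _
          apply Finset.sum_congr rfl
          intro c _
          rw [expand]
      _ = (∑ i, ∑ c, (b i c - a i c) * ((f i : ℕ) : ℤ))
            + (∑ i, ∑ c, (b i c - a i c) * ((g c : ℕ) : ℤ))
            - (j : ℤ) * ∑ i, ∑ c, (b i c - a i c) := by
          rw [Finset.mul_sum]
          rw [← Finset.sum_add_distrib, ← Finset.sum_sub_distrib]
          apply Finset.sum_congr rfl
          intro i _
          rw [Finset.mul_sum]
          rw [← Finset.sum_add_distrib, ← Finset.sum_sub_distrib]
      _ = 0 := by rw [Sf, Sg, S0]; ring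
  -- flatten and get pointwise zero
  have S3' : ∑ p ∈ (univ : Finset (Fin m)) ×ˢ (univ : Finset (Fin n)),
      (b p.1 p.2 - a p.1 p.2) * (((f p.1 : ℕ) : ℤ) + ((g p.2 : ℕ) : ℤ) - (j : ℤ)) = 0 := by
    rw [Finset.sum_product]
    exact S3
  have hnonneg : ∀ p ∈ (univ : Finset (Fin m)) ×ˢ (univ : Finset (Fin n)),
      0 ≤ (b p.1 p.2 - a p.1 p.2) * (((f p.1 : ℕ) : ℤ) + ((g p.2 : ℕ) : ℤ) - (j : ℤ)) := by
    rintro ⟨i, c⟩ -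
    have hbv : b i c = (((thr j f g) i c).toNat : ℤ) := rfl
    have hav : a i c = ((N i c).toNat : ℤ) := rfl
    rcases hM : (thr j f g) i c with _ | _
    · have hw : ¬ (j < (f i : ℕ) + (g c : ℕ)) := by
        have := hM
        unfold thr at this
        simpa using this
      have : b i c = 0 := by rw [hbv, hM]; rfl
      rcases hN : N i c with _ | _
      · have : a i c = 0 := by rw [hav, hN]; rfl
        simp_all
      · have ha1 : a i c = 1 := by rw [hav, hN]; rfl
        rw [this, ha1]
        have : ((f i : ℕ) : ℤ) + ((g c : ℕ) : ℤ) - (j : ℤ) ≤ 0 := by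
          push_cast
          omega
        nlinarith
    · have hw : j < (f i : ℕ) + (g c : ℕ) := by
        have := hM
        unfold thr at this
        simpa using this
      have hb1 : b i c = 1 := by rw [hbv, hM]; rfl
      have haa : 0 ≤ a i c ∧ a i c ≤ 1 := by
        rw [hav]
        rcases N i c <;> simp
      have : 1 ≤ ((f i : ℕ) : ℤ) + ((g c : ℕ) : ℤ) - (j : ℤ) := by
        push_cast
        omega
      nlinarith [haa.1, haa.2]
  have hzero := (Finset.sum_eq_zero_iff_of_nonneg hnonneg).1 S3'
  -- stage 1 : thr ≤ N pointwise
  have hMN : ∀ i c, (thr j f g) i c = true → N i c = true := by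
    intro i c hM
    have hz := hzero (i, c) (by simp)
    have hw : j < (f i : ℕ) + (g c : ℕ) := by
      have := hM
      unfold thr at this
      simpa using this
    have hb1 : b i c = 1 := by
      show (((thr j f g) i c).toNat : ℤ) = 1
      rw [hM]; rfl
    rcases hN : N i c with _ | _
    · have ha0 : a i c = 0 := by
        show ((N i c).toNat : ℤ) = 0
        rw [hN]; rfl
      rw [hb1, ha0] at hz
      simp at hz
      push_cast at hz
      omega
    · rfl
  -- stage 2 : equal sums force equality
  funext i c
  rcases hM : (thr j f g) i c with _ | _
  · by_contra hcon
    rw [Bool.not_eq_false] at hcon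
    have hN : N i c = true := hcon
    -- a - b pointwise nonneg with zero sum
    have hptge : ∀ p ∈ (univ : Finset (Fin m)) ×ˢ (univ : Finset (Fin n)),
        0 ≤ a p.1 p.2 - b p.1 p.2 := by
      rintro ⟨i', c'⟩ -
      show 0 ≤ a i' c' - b i' c'
      rcases hM' : (thr j f g) i' c' with _ | _
      · have : b i' c' = 0 := by show (((thr j f g) i' c').toNat : ℤ) = 0; rw [hM']; rfl
        rw [this]
        have : 0 ≤ a i' c' := by
          show (0 : ℤ) ≤ ((N i' c').toNat : ℤ)
          positivity
        omega
      · have h1 : b i' c' = 1 := by show (((thr j f g) i' c').toNat : ℤ) = 1; rw [hM']; rfl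
        have h2 : a i' c' = 1 := by
          show ((N i' c').toNat : ℤ) = 1
          rw [hMN i' c' hM']; rfl
        rw [h1, h2]
        norm_num
    have hsz : ∑ p ∈ (univ : Finset (Fin m)) ×ˢ (univ : Finset (Fin n)),
        (a p.1 p.2 - b p.1 p.2) = 0 := by
      rw [Finset.sum_product]
      have : ∀ i', ∑ c', (a i' c' - b i' c') = -(∑ c', (b i' c' - a i' c')) := by
        intro i'
        rw [← Finset.sum_neg_distrib]
        apply Finset.sum_congr rfl
        intro c' _
        ring
      calc ∑ i', ∑ c', (a i' c' - b i' c')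
          = ∑ i', -(∑ c', (b i' c' - a i' c')) := Finset.sum_congr rfl (fun i' _ => this i')
        _ = -(∑ i', ∑ c', (b i' c' - a i' c')) := by rw [Finset.sum_neg_distrib]
        _ = 0 := by rw [S0]; ring
    have h5 : a i c - b i c = 0 := (Finset.sum_eq_zero_iff_of_nonneg hptge).1 hsz (i, c) (by simp)
    have hb0 : b i c = 0 := by show (((thr j f g) i c).toNat : ℤ) = 0; rw [hM]; rfl
    have ha1 : a i c = 1 := by show ((N i c).toNat : ℤ) = 1; rw [hN]; rfl
    omega
  · exact hMN i c hM

end Part2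


/-- The number of `n₁ × n₂` lonesum matrices is
`∑_{j=0}^{min(n₁,n₂)} (j!)² S(n₁+1,j+1) S(n₂+1,j+1)`. -/
theorem card_lonesum_eq (n₁ n₂ : ℕ) (h₁ : 1 ≤ n₁) (h₂ : 1 ≤ n₂) :
    Nat.card {M : Fin n₁ → Fin n₂ → Bool // IsLonesum M} =
      ∑ j ∈ Finset.range (min n₁ n₂ + 1),
        (Nat.factorial j) ^ 2 * stirling2 (n₁ + 1) (j + 1) * stirling2 (n₂ + 1) (j + 1) := by
  classical
  have hbij : Function.Bijective (fun x : (Σ jj : Fin (min n₁ n₂ + 1),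
        ({f : Fin n₁ → Fin ((jj : ℕ) + 1) // ∀ t, t ≠ 0 → ∃ i, f i = t} ×
         {g : Fin n₂ → Fin ((jj : ℕ) + 1) // ∀ t, t ≠ 0 → ∃ i, g i = t})) =>
      (⟨thr (x.1 : ℕ) x.2.1.1 x.2.2.1,
        thr_lonesum (x.1 : ℕ) x.2.1.1 x.2.2.1⟩ : {M : Fin n₁ → Fin n₂ → Bool // IsLonesum M})) := by
    constructor
    · rintro ⟨⟨j1, hj1⟩, ⟨f1, hf1⟩, ⟨g1, hg1⟩⟩ ⟨⟨j2, hj2⟩, ⟨f2, hf2⟩, ⟨g2, hg2⟩⟩ h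
      have hM : thr j1 f1 g1 = thr j2 f2 g2 := congrArg Subtype.val h
      have hj : j2 = j1 := by
        have e1 : kOf (thr j1 f1 g1) = j1 := kOf_thr hf1 hg1
        rw [hM, kOf_thr hf2 hg2] at e1
        exact e1
      subst hj
      have hf : f1 = f2 := by
        funext i
        apply Fin.ext
        have e1 : fOf (thr j2 f1 g1) i = (f1 i : ℕ) := fOf_thr hf1 hg1 i
        rw [hM, fOf_thr hf2 hg2 i] at e1
        exact e1.symm
      have hg : g1 = g2 := by
        funext c
        apply Fin.ext
        have e1 : fOf (tr (thr j2 f1 g1)) c = (g1 c : ℕ) := by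
          rw [tr_thr]
          exact fOf_thr hg1 hf1 c
        rw [hM, tr_thr, fOf_thr hg2 hf2 c] at e1
        exact e1.symm
      subst hf
      subst hg
      rfl
    · rintro ⟨M, hM⟩
      have hch : chainP M := chain_of_lonesum hM
      have hk1 : kOf M ≤ n₁ := kOf_le M
      have hk2 : kOf M ≤ n₂ := by
        rw [← kOf_tr hch]
        exact kOf_le (tr M)
      have hgle : ∀ c, fOf (tr M) c ≤ kOf M := by
        intro c
        have := fOf_le (tr M) c
        rw [kOf_tr hch] at this
        exact this
      refine ⟨⟨⟨kOf M, by omega⟩,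
        ⟨fun i => ⟨fOf M i, Nat.lt_succ_of_le (fOf_le M i)⟩, ?_⟩,
        ⟨fun c => ⟨fOf (tr M) c, Nat.lt_succ_of_le (hgle c)⟩, ?_⟩⟩, ?_⟩
      · intro t ht
        have ht1 : 1 ≤ (t : ℕ) := by
          rcases Nat.eq_zero_or_pos (t : ℕ) with h0 | h0
          · exact absurd (Fin.ext h0) ht
          · exact h0
        have ht2 : (t : ℕ) ≤ kOf M := Nat.lt_succ_iff.mp t.isLt
        obtain ⟨i, hi⟩ := fOf_surj M ht1 ht2
        exact ⟨i, Fin.ext hi⟩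
      · intro t ht
        have ht1 : 1 ≤ (t : ℕ) := by
          rcases Nat.eq_zero_or_pos (t : ℕ) with h0 | h0
          · exact absurd (Fin.ext h0) ht
          · exact h0
        have ht2 : (t : ℕ) ≤ kOf (tr M) := by
          rw [kOf_tr hch]
          exact Nat.lt_succ_iff.mp t.isLt
        obtain ⟨c, hc⟩ := fOf_surj (tr M) ht1 ht2
        exact ⟨c, Fin.ext hc⟩
      · apply Subtype.ext
        funext i c
        show decide (kOf M < fOf M i + fOf (tr M) c) = M i c
        have hiff := thr_iff hch i c
        have hsplit := k_split M i
        have hiff2 : kOf M < fOf M i + fOf (tr M) c ↔ M i c = true := by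
          rw [hiff]
          omega
        rcases hmc : M i c with _ | _
        · apply decide_eq_false
          intro hcon
          have := hiff2.1 hcon
          rw [hmc] at this
          simp at this
        · exact decide_eq_true (hiff2.2 hmc)
  rw [← Nat.card_eq_of_bijective _ hbij, Nat.card_eq_fintype_card, Fintype.card_sigma]
  have hterm : ∀ jj : Fin (min n₁ n₂ + 1),
      Fintype.card ({f : Fin n₁ → Fin ((jj : ℕ) + 1) // ∀ t, t ≠ 0 → ∃ i, f i = t} ×
        {g : Fin n₂ → Fin ((jj : ℕ) + 1) // ∀ t, t ≠ 0 → ∃ i, g i = t})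
      = (Nat.factorial (jj : ℕ)) ^ 2 * stirling2 (n₁ + 1) ((jj : ℕ) + 1)
          * stirling2 (n₂ + 1) ((jj : ℕ) + 1) := by
    intro jj
    rw [Fintype.card_prod, ← Nat.card_eq_fintype_card, ← Nat.card_eq_fintype_card,
      card_hits n₁ (jj : ℕ), card_hits n₂ (jj : ℕ)]
    ring
  rw [Finset.sum_congr rfl (fun jj _ => hterm jj)]
  exact Fin.sum_univ_eq_sum_range
    (fun j => (Nat.factorial j) ^ 2 * stirling2 (n₁ + 1) (j + 1) * stirling2 (n₂ + 1) (j + 1))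
    (min n₁ n₂ + 1)
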